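/- Every VNL commutative ring is clean. -/

import Mathlib

open Matrix

/-- A commutative ring `T` has stable range 1: whenever `cT + dT = T`,
there exists `y` with `c + d*y` a unit. -/
def StableRange1 (T : Type) [CommRing T] : Prop :=
  ∀ c d : T, IsCoprime c d → ∃ y : T, IsUnit (c + d * y)

/-- The multiplicative set `S_a = { b | aR + bR = R }`. -/
def Sa (R : Type) [CommRing R] (a : R) : Submonoid R where
  carrier := {x | IsCoprime a x}
  one_mem' := isCoprime_one_right
  mul_mem' := fun hb hc => IsCoprime.mul_right hb hc

/-- `R` is locally stable: whenever `aR + bR = R` there is `y` such that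
`R/(a+by)R` has stable range 1. -/
def LocallyStable (R : Type) [CommRing R] : Prop :=
  ∀ a b : R, IsCoprime a b → ∃ y : R,
    StableRange1 (R ⧸ Ideal.span ({a + b * y} : Set R))

/-- `c` is an adequate element. -/
def Adequate {R : Type} [CommRing R] (c : R) : Prop :=
  ∀ a : R, ∃ r s : R, c = r * s ∧ IsCoprime r a ∧
    ∀ s' : R, s' ∣ s → ¬ IsUnit s' → ¬ IsCoprime s' a

/-- A ring is clean if every element is the sum of an idempotent and a unit. -/
def IsCleanRing (T : Type) [CommRing T] : Prop :=
  ∀ x : T, ∃ e u : T, IsIdempotentElem e ∧ IsUnit u ∧ x = e + u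

/-- A ring is VNL if for every `x`, `x` or `1 - x` is von Neumann regular. -/
def IsVNLRing (T : Type) [CommRing T] : Prop :=
  ∀ x : T, (∃ y : T, x = x * y * x) ∨ (∃ y : T, (1 - x) = (1 - x) * y * (1 - x))

/-- `R` has almost stable range 1: every proper homomorphic image has stable range 1. -/
def AlmostStableRange1 (R : Type) [CommRing R] : Prop :=
  ∀ I : Ideal R, I ≠ ⊥ → StableRange1 (R ⧸ I)

/-- `R` has adequate range 1. -/
def AdequateRange1 (R : Type) [CommRing R] : Prop :=
  ∀ a b : R, IsCoprime a b → ∃ y : R, Adequate (a + b * y)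

/-- A (rectangular) matrix admits diagonal reduction. -/
def DiagonalReduction {R : Type} [CommRing R] {m n : ℕ}
    (A : Matrix (Fin m) (Fin n) R) : Prop :=
  ∃ (P : Matrix (Fin m) (Fin m) R) (Q : Matrix (Fin n) (Fin n) R),
    IsUnit P ∧ IsUnit Q ∧
    (∀ (i : Fin m) (j : Fin n), (i : ℕ) ≠ (j : ℕ) → (P * A * Q) i j = 0) ∧
    (∀ (i i' : Fin m) (j j' : Fin n), (i : ℕ) = (j : ℕ) → (i' : ℕ) = (j' : ℕ) →
      (i : ℕ) + 1 = (i' : ℕ) → (P * A * Q) i j ∣ (P * A * Q) i' j')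

/-- `R` is an elementary divisor ring. -/
def ElementaryDivisorRing (R : Type) [CommRing R] : Prop :=
  ∀ (m n : ℕ) (A : Matrix (Fin m) (Fin n) R), DiagonalReduction A

/-- `GE n R` : the subgroup of `GL n R` generated by elementary matrices. -/
def GE (n : ℕ) (R : Type) [CommRing R] : Subgroup (GL (Fin n) R) :=
  Subgroup.closure
    { M | ∃ t : Matrix.TransvectionStruct (Fin n) R,
        (M : Matrix (Fin n) (Fin n) R) = t.toMatrix }

lemma regular_clean_decomp {T : Type} [CommRing T] (x : T)
    (h : ∃ y : T, x = x * y * x) :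
    ∃ e u : T, IsIdempotentElem e ∧ IsUnit u ∧ x = e + u := by
  obtain ⟨y, hx⟩ := h
  refine ⟨1 - x * y, x + x * y - 1, ?_, ?_, by ring⟩
  · have he : IsIdempotentElem (x * y) := by
      unfold IsIdempotentElem
      linear_combination (-y) * hx
    exact he.one_sub
  · refine IsUnit.of_mul_eq_one (x * y * y + x * y - 1) ?_
    linear_combination (-(y + 1) ^ 2) * hx

/-- Every VNL commutative ring is clean. -/
theorem stmt_15 (T : Type) [CommRing T] (h : IsVNLRing T) : IsCleanRing T := by
  intro x
  rcases h x with hr | hr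
  · exact regular_clean_decomp x hr
  · obtain ⟨e, u, he, hu, hdec⟩ := regular_clean_decomp (1 - x) hr
    exact ⟨1 - e, -u, he.one_sub, hu.neg, by linear_combination -hdec⟩
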